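/- Let N ≥ 2, K ≥ 1, and let q : (Fin K)^N → ℝ be nonnegative weights with Σ_k q(k) = 1. Let |G̃⟩ ∈ ⊗_{i=1}^N ℂ^{2K} and the local isometries Φᵢ : ℂ^{2K} → ℂ^{2K}⊗ℂ² be as follows: |G̃⟩ = Σ_k √(q(k))·(1/√2)(⊗_i e_{2k_i} + ⊗_i e_{2k_i+1}), Φᵢ(e_{2k}) = e_{2k}⊗f₀, Φᵢ(e_{2k+1}) = e_{2k}⊗f₁. Define the block-diagonal experimental observable Ã_{11} on ℂ^{2K} by Ã_{11} = Σ_{k=0}^{K−1} [ (−(N−1)/√(1+(N−1)²))·(e_{2k}e_{2k}^* − e_{2k+1}e_{2k+1}^*) + (1/√(1+(N−1)²))·(e_{2k}e_{2k+1}^* + e_{2k+1}e_{2k}^*) ]. Then, under the canonical reordering isomorphism ⊗_i(ℂ^{2K}⊗ℂ²) ≅ (⊗_i ℂ^{2K}) ⊗ (⊗_i ℂ²), one has (⊗_{i=1}^N Φᵢ)((Ã_{11}⊗Id⊗⋯⊗Id)|G̃⟩) = |junk⟩ ⊗ ((A*_{11}⊗I₂⊗⋯⊗I₂)|GHZ_N⟩),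 where |junk⟩ = Σ_k √(q(k)) ⊗_i e_{2k_i}, |GHZ_N⟩ = (1/√2)(f₀^{⊗N}+f₁^{⊗N}), and A*_{11} = (−(N−1)·σz + σx)/√(1+(N−1)²) acting on ℂ² with basis f₀, f₁. -/

import Mathlib

open Matrix BigOperators Finset

noncomputable section

/-- Tensor product of `N` square matrices on `ℂ^{2K}`, indexed by `Fin N → Fin (2K)`. -/
def tensorBig (N K : ℕ) (M : Fin N → Matrix (Fin (2 * K)) (Fin (2 * K)) ℂ) :
    Matrix (Fin N → Fin (2 * K)) (Fin N → Fin (2 * K)) ℂ :=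
  Matrix.of fun f g => ∏ i, M i (f i) (g i)

/-- Tensor product of `N` 2×2 complex matrices, indexed by bit strings `Fin N → Fin 2`. -/
def tensorN (N : ℕ) (M : Fin N → Matrix (Fin 2) (Fin 2) ℂ) :
    Matrix (Fin N → Fin 2) (Fin N → Fin 2) ℂ :=
  Matrix.of fun f g => ∏ i, M i (f i) (g i)

def sigmax : Matrix (Fin 2) (Fin 2) ℂ := !![0, 1; 1, 0]
def sigmaz : Matrix (Fin 2) (Fin 2) ℂ := !![1, 0; 0, -1]

/-- The even basis index `2k : Fin (2K)`. -/
def ev {K : ℕ} (k : Fin K) : Fin (2 * K) := ⟨2 * (k : ℕ), by have := k.isLt; omega⟩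

/-- The odd basis index `2k+1 : Fin (2K)`. -/
def od {K : ℕ} (k : Fin K) : Fin (2 * K) := ⟨2 * (k : ℕ) + 1, by have := k.isLt; omega⟩

/-- The matrix entries of the SWAP-type local isometry
`Φᵢ : ℂ^{2K} → ℂ^{2K}⊗ℂ²`, `Φᵢ(e_{2k}) = e_{2k}⊗f₀`, `Φᵢ(e_{2k+1}) = e_{2k}⊗f₁`. -/
def isoEntry (K : ℕ) : Fin (2 * K) × Fin 2 → Fin (2 * K) → ℂ := fun p m =>
  if (p.1 : ℕ) = 2 * ((m : ℕ) / 2) ∧ (p.2 : ℕ) = (m : ℕ) % 2 then 1 else 0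

/-- The experimental state `|G̃⟩ = Σ_k √(q k) (1/√2)(⊗ᵢ e_{2kᵢ} + ⊗ᵢ e_{2kᵢ+1})`. -/
def Gtilde (N K : ℕ) (q : (Fin N → Fin K) → ℝ) : (Fin N → Fin (2 * K)) → ℂ := fun f =>
  ∑ k : Fin N → Fin K, ((Real.sqrt (q k) : ℝ) : ℂ) * ((Real.sqrt 2 : ℝ) : ℂ)⁻¹ *
    ((∏ i, if (f i : ℕ) = 2 * (k i : ℕ) then (1 : ℂ) else 0)
      + ∏ i, if (f i : ℕ) = 2 * (k i : ℕ) + 1 then (1 : ℂ) else 0)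

/-- The junk state `|junk⟩ = Σ_k √(q k) ⊗ᵢ e_{2kᵢ}`. -/
def junk (N K : ℕ) (q : (Fin N → Fin K) → ℝ) : (Fin N → Fin (2 * K)) → ℂ := fun g =>
  ∑ k : Fin N → Fin K, ((Real.sqrt (q k) : ℝ) : ℂ) *
    ∏ i, if (g i : ℕ) = 2 * (k i : ℕ) then (1 : ℂ) else 0

/-- The `N`-qubit GHZ state. -/
def ghz (N : ℕ) : (Fin N → Fin 2) → ℂ := fun f =>
  if f = (fun _ => 0) then ((Real.sqrt 2 : ℝ) : ℂ)⁻¹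
  else if f = (fun _ => 1) then ((Real.sqrt 2 : ℝ) : ℂ)⁻¹ else 0

/-- The block-diagonal experimental observable `Ã₁₁ = ⊕_k A₁₁^{(k)}` on `ℂ^{2K}`. -/
def Atilde11 (N K : ℕ) : Matrix (Fin (2 * K)) (Fin (2 * K)) ℂ :=
  ∑ k : Fin K,
    ((((-((N : ℝ) - 1) / Real.sqrt (1 + ((N : ℝ) - 1) ^ 2)) : ℝ) : ℂ) •
        (Matrix.single (ev k) (ev k) (1 : ℂ) - Matrix.single (od k) (od k) (1 : ℂ))
      + (((1 / Real.sqrt (1 + ((N : ℝ) - 1) ^ 2)) : ℝ) : ℂ) •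
        (Matrix.single (ev k) (od k) (1 : ℂ) + Matrix.single (od k) (ev k) (1 : ℂ)))

/-- The reference observable `A*₁₁ = (−(N−1) σz + σx)/√(1+(N−1)²)` on ℂ². -/
def Astar11 (N : ℕ) : Matrix (Fin 2) (Fin 2) ℂ :=
  ((Real.sqrt (1 + ((N : ℝ) - 1) ^ 2) : ℝ) : ℂ)⁻¹ •
    (((-((N : ℝ) - 1) : ℝ) : ℂ) • sigmaz + sigmax)

lemma Astar_00 (N : ℕ) : Astar11 N 0 0
    = ((-((N : ℝ) - 1) / Real.sqrt (1 + ((N : ℝ) - 1) ^ 2) : ℝ) : ℂ) := by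
  simp [Astar11, sigmax, sigmaz, div_eq_inv_mul]
lemma Astar_11 (N : ℕ) : Astar11 N 1 1
    = -((-((N : ℝ) - 1) / Real.sqrt (1 + ((N : ℝ) - 1) ^ 2) : ℝ) : ℂ) := by
  simp [Astar11, sigmax, sigmaz, div_eq_inv_mul]; ring
lemma Astar_01 (N : ℕ) : Astar11 N 0 1
    = ((1 / Real.sqrt (1 + ((N : ℝ) - 1) ^ 2) : ℝ) : ℂ) := by
  simp [Astar11, sigmax, sigmaz, div_eq_inv_mul]
lemma Astar_10 (N : ℕ) : Astar11 N 1 0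
    = ((1 / Real.sqrt (1 + ((N : ℝ) - 1) ^ 2) : ℝ) : ℂ) := by
  simp [Astar11, sigmax, sigmaz, div_eq_inv_mul]

lemma zne {K : ℕ} (x y u v : Fin (2 * K)) (h : (x : ℕ) ≠ (u : ℕ) ∨ (y : ℕ) ≠ (v : ℕ)) :
    Matrix.single x y (1 : ℂ) u v = 0 := by
  apply Matrix.single_apply_of_ne
  rintro ⟨rfl, rfl⟩
  rcases h with h | h <;> exact h rfl

lemma Atilde_entry (N K : ℕ) (c k : Fin K) (s t : Fin 2)
    (m : Fin (2 * K)) (hm : (m : ℕ) = 2 * (c : ℕ) + (s : ℕ))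
    (n : Fin (2 * K)) (hn : (n : ℕ) = 2 * (k : ℕ) + (t : ℕ)) :
    Atilde11 N K m n = if c = k then Astar11 N s t else 0 := by
  have hs := s.isLt; have ht := t.isLt
  rw [Atilde11, Matrix.sum_apply]
  rw [Finset.sum_eq_single k]
  · simp only [Matrix.add_apply, Matrix.sub_apply, Matrix.smul_apply, smul_eq_mul]
    by_cases hck : c = k
    · subst hck
      rw [if_pos rfl]
      rcases (by omega : (s : ℕ) = 0 ∨ (s : ℕ) = 1) with hs0 | hs0 <;>
        rcases (by omega : (t : ℕ) = 0 ∨ (t : ℕ) = 1) with ht0 | ht0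
      · rw [show s = 0 from Fin.ext hs0, show t = 0 from Fin.ext ht0, Astar_00]
        rw [show m = ev c from Fin.ext (by simp [ev]; omega),
            show n = ev c from Fin.ext (by simp [ev]; omega)]
        rw [Matrix.single_apply_same,
            zne _ _ _ _ (Or.inl (by simp only [ev, od]; omega)),
            zne _ _ _ _ (Or.inr (by simp only [ev, od]; omega)),
            zne _ _ _ _ (Or.inl (by simp only [ev, od]; omega))]
        ring
      · rw [show s = 0 from Fin.ext hs0, show t = 1 from Fin.ext ht0, Astar_01]
        rw [show m = ev c from Fin.ext (by simp [ev]; omega),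
            show n = od c from Fin.ext (by simp [od]; omega)]
        rw [Matrix.single_apply_same,
            zne _ _ _ _ (Or.inr (by simp only [ev, od]; omega)),
            zne _ _ _ _ (Or.inl (by simp only [ev, od]; omega)),
            zne _ _ _ _ (Or.inl (by simp only [ev, od]; omega))]
        ring
      · rw [show s = 1 from Fin.ext hs0, show t = 0 from Fin.ext ht0, Astar_10]
        rw [show m = od c from Fin.ext (by simp [od]; omega),
            show n = ev c from Fin.ext (by simp [ev]; omega)]
        rw [Matrix.single_apply_same,
            zne _ _ _ _ (Or.inl (by simp only [ev, od]; omega)),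
            zne _ _ _ _ (Or.inr (by simp only [ev, od]; omega)),
            zne _ _ _ _ (Or.inl (by simp only [ev, od]; omega))]
        ring
      · rw [show s = 1 from Fin.ext hs0, show t = 1 from Fin.ext ht0, Astar_11]
        rw [show m = od c from Fin.ext (by simp [od]; omega),
            show n = od c from Fin.ext (by simp [od]; omega)]
        rw [Matrix.single_apply_same,
            zne _ _ _ _ (Or.inl (by simp only [ev, od]; omega)),
            zne _ _ _ _ (Or.inl (by simp only [ev, od]; omega)),
            zne _ _ _ _ (Or.inr (by simp only [ev, od]; omega))]
        ring
    · have hck2 : (c : ℕ) ≠ (k : ℕ) := fun h => hck (Fin.ext h)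
      rw [if_neg hck]
      rw [zne _ _ _ _ (Or.inl (by simp [ev]; omega)),
          zne _ _ _ _ (Or.inl (by simp [od]; omega)),
          zne _ _ _ _ (Or.inl (by simp [ev]; omega)),
          zne _ _ _ _ (Or.inl (by simp [od]; omega))]
      ring
  · intro k2 _ hk2
    have hk3 : (k2 : ℕ) ≠ (k : ℕ) := fun h => hk2 (Fin.ext h)
    simp only [Matrix.add_apply, Matrix.sub_apply, Matrix.smul_apply, smul_eq_mul]
    rw [zne _ _ _ _ (Or.inr (by simp [ev]; omega)),
        zne _ _ _ _ (Or.inr (by simp [od]; omega)),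
        zne _ _ _ _ (Or.inr (by simp [od]; omega)),
        zne _ _ _ _ (Or.inr (by simp [ev]; omega))]
    ring
  · simp

/-- Self-testing of the observable `A₁₁` (Appendix B): the local isometries map
`(Ã₁₁⊗Id⊗⋯⊗Id)|G̃⟩` to `|junk⟩ ⊗ ((A*₁₁⊗I₂⊗⋯⊗I₂)|GHZ_N⟩)`. -/
theorem self_test_A11 (N K : ℕ) (hN : 2 ≤ N) (hK : 1 ≤ K)
    (q : (Fin N → Fin K) → ℝ) (hq : ∀ k, 0 ≤ q k) (hsum : ∑ k, q k = 1) :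
    ∀ (g : Fin N → Fin (2 * K)) (b : Fin N → Fin 2),
      (∑ f : Fin N → Fin (2 * K),
          (∏ i, isoEntry K (g i, b i) (f i)) *
            ((tensorBig N K (fun i => if i = (⟨0, by omega⟩ : Fin N)
                then Atilde11 N K else 1)).mulVec (Gtilde N K q)) f)
        = junk N K q g *
            ((tensorN N (fun i => if i = (⟨0, by omega⟩ : Fin N)
                then Astar11 N else 1)).mulVec (ghz N)) b := by
  intro g b
  by_cases hg : ∀ i, (g i : ℕ) % 2 = 0
  · -- all g i even
    set i0 : Fin N := ⟨0, by omega⟩ with hi0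
    set κ : Fin N → Fin K := fun i => ⟨(g i : ℕ) / 2, by have := (g i).isLt; omega⟩ with hκ
    have hgi : ∀ i, (g i : ℕ) = 2 * (κ i : ℕ) := by
      intro i; have := hg i; simp only [hκ]; omega
    set f0 : Fin N → Fin (2 * K) :=
      fun i => ⟨2 * (κ i : ℕ) + (b i : ℕ), by have := (κ i).isLt; have := (b i).isLt; omega⟩
      with hf0
    set M : Fin N → Matrix (Fin (2 * K)) (Fin (2 * K)) ℂ :=
      fun i => if i = i0 then Atilde11 N K else 1 with hM
    -- Step A : collapse the sum over f
    have stepA : ∀ f : Fin N → Fin (2 * K),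
        (∏ i, isoEntry K (g i, b i) (f i))
          = if f = f0 then 1 else 0 := by
      intro f
      have h1 : ∀ i, isoEntry K (g i, b i) (f i) = if f i = f0 i then (1 : ℂ) else 0 := by
        intro i
        have h2 := (f i).isLt
        have h3 := (b i).isLt
        have h4 := hgi i
        simp only [isoEntry]
        apply if_congr _ rfl rfl
        rw [Fin.ext_iff]
        show _ ↔ (f i : ℕ) = 2 * (κ i : ℕ) + (b i : ℕ)
        omega
      by_cases hf : f = f0
      · subst hf
        rw [if_pos rfl]
        exact Finset.prod_eq_one fun i _ => by rw [h1 i, if_pos rfl]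
      · rw [if_neg hf]
        obtain ⟨j, hj⟩ := Function.ne_iff.mp hf
        exact Finset.prod_eq_zero (Finset.mem_univ j) (by rw [h1 j, if_neg hj])
    rw [Finset.sum_congr rfl (fun f _ => by
      rw [stepA f, ite_mul, one_mul, zero_mul]),
      Finset.sum_ite_eq' Finset.univ f0, if_pos (Finset.mem_univ f0)]
    -- generic collapse of a sum against a delta-product
    have hcollapse : ∀ (v : Fin N → ℕ) (e : Fin N → Fin (2 * K)) (_ : ∀ i, (e i : ℕ) = v i)
        (F : (Fin N → Fin (2 * K)) → ℂ),
        (∑ h : Fin N → Fin (2 * K), F h * ∏ i, (if (h i : ℕ) = v i then (1 : ℂ) else 0))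
          = F e := by
      intro v e he F
      have h1 : ∀ h : Fin N → Fin (2 * K),
          (∏ i, if (h i : ℕ) = v i then (1 : ℂ) else 0) = if h = e then 1 else 0 := by
        intro h
        by_cases hh : h = e
        · subst hh
          rw [if_pos rfl]
          exact Finset.prod_eq_one fun i _ => if_pos (he i)
        · rw [if_neg hh]
          obtain ⟨j, hj⟩ := Function.ne_iff.mp hh
          refine Finset.prod_eq_zero (Finset.mem_univ j) (if_neg fun hc => hj (Fin.ext ?_))
          rw [hc, he j]
      rw [Finset.sum_congr rfl fun h _ => by rw [h1 h, mul_ite, mul_one, mul_zero],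
        Finset.sum_ite_eq' Finset.univ e F, if_pos (Finset.mem_univ e)]
    -- evaluation of the tensor-product matrix entries
    have hD : ∀ (k : Fin N → Fin K) (t : Fin 2) (h : Fin N → Fin (2 * K)),
        (∀ i, (h i : ℕ) = 2 * (k i : ℕ) + (t : ℕ)) →
        (∏ i, M i (f0 i) (h i))
          = if k = κ then Astar11 N (b i0) t *
              ∏ i ∈ Finset.univ.erase i0, (if b i = t then (1 : ℂ) else 0)
            else 0 := by
      intro k t h hh
      by_cases hkκ : k = κ
      · subst hkκ
        rw [if_pos rfl, ← Finset.mul_prod_erase Finset.univ _ (Finset.mem_univ i0)]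
        congr 1
        · show (if i0 = i0 then Atilde11 N K else 1) (f0 i0) (h i0) = _
          rw [if_pos rfl]
          rw [Atilde_entry N K (κ i0) (κ i0) (b i0) t (f0 i0) rfl (h i0) (hh i0), if_pos rfl]
        · apply Finset.prod_congr rfl
          intro i hi
          have hii : i ≠ i0 := Finset.ne_of_mem_erase hi
          show (if i = i0 then Atilde11 N K else 1) (f0 i) (h i) = _
          rw [if_neg hii, Matrix.one_apply]
          apply if_congr _ rfl rfl
          have h2 := (b i).isLt
          have h3 := t.isLt
          have h4 := hh i
          have h8 : (f0 i : ℕ) = 2 * (κ i : ℕ) + (b i : ℕ) := rfl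
          have h9 : (κ i : ℕ) = (g i : ℕ) / 2 := rfl
          simp only [Fin.ext_iff]
          omega
      · rw [if_neg hkκ]
        obtain ⟨j, hj⟩ := Function.ne_iff.mp hkκ
        have hj2 : (k j : ℕ) ≠ (κ j : ℕ) := fun hc => hj (Fin.ext hc)
        apply Finset.prod_eq_zero (Finset.mem_univ j)
        by_cases hji : j = i0
        · subst hji
          show (if i0 = i0 then Atilde11 N K else 1) (f0 i0) (h i0) = 0
          rw [if_pos rfl]
          rw [Atilde_entry N K (κ i0) (k i0) (b i0) t (f0 i0) rfl (h i0) (hh i0),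
            if_neg (fun hc => hj2 ((congrArg Fin.val hc).symm))]
        · show (if j = i0 then Atilde11 N K else 1) (f0 j) (h j) = 0
          rw [if_neg hji, Matrix.one_apply, if_neg]
          intro hc
          have h4 := hh j
          have h5 := (b j).isLt
          have h6 := t.isLt
          have h7 : (f0 j : ℕ) = (h j : ℕ) := congrArg Fin.val hc
          have h8 : (f0 j : ℕ) = 2 * (κ j : ℕ) + (b j : ℕ) := rfl
          omega
    -- name the second tensor matrix
    set M2 : Fin N → Matrix (Fin 2) (Fin 2) ℂ :=
      fun i => if i = i0 then Astar11 N else 1 with hM2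
    show (tensorBig N K M).mulVec (Gtilde N K q) f0
        = junk N K q g * (tensorN N M2).mulVec (ghz N) b
    set P0 : ℂ := ∏ i ∈ Finset.univ.erase i0, (if b i = 0 then (1 : ℂ) else 0) with hP0
    set P1 : ℂ := ∏ i ∈ Finset.univ.erase i0, (if b i = 1 then (1 : ℂ) else 0) with hP1
    -- LHS evaluation
    have hLHS : (tensorBig N K M).mulVec (Gtilde N K q) f0
        = ((Real.sqrt (q κ) : ℝ) : ℂ) * ((Real.sqrt 2 : ℝ) : ℂ)⁻¹ *
            (Astar11 N (b i0) 0 * P0 + Astar11 N (b i0) 1 * P1) := by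
      show (∑ h : Fin N → Fin (2 * K), (∏ i, M i (f0 i) (h i)) * Gtilde N K q h) = _
      simp only [Gtilde]
      calc
        (∑ h : Fin N → Fin (2 * K), (∏ i, M i (f0 i) (h i)) *
            ∑ k : Fin N → Fin K, ((Real.sqrt (q k) : ℝ) : ℂ) * ((Real.sqrt 2 : ℝ) : ℂ)⁻¹ *
              ((∏ i, if (h i : ℕ) = 2 * (k i : ℕ) then (1 : ℂ) else 0)
                + ∏ i, if (h i : ℕ) = 2 * (k i : ℕ) + 1 then (1 : ℂ) else 0))
          = ∑ k : Fin N → Fin K, ((Real.sqrt (q k) : ℝ) : ℂ) * ((Real.sqrt 2 : ℝ) : ℂ)⁻¹ *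
              ((∑ h : Fin N → Fin (2 * K), (∏ i, M i (f0 i) (h i)) *
                  ∏ i, if (h i : ℕ) = 2 * (k i : ℕ) then (1 : ℂ) else 0)
               + ∑ h : Fin N → Fin (2 * K), (∏ i, M i (f0 i) (h i)) *
                  ∏ i, if (h i : ℕ) = 2 * (k i : ℕ) + 1 then (1 : ℂ) else 0) := by
            rw [Finset.sum_congr rfl fun h _ => Finset.mul_sum _ _ _, Finset.sum_comm]
            apply Finset.sum_congr rfl
            intro k _
            rw [mul_add, Finset.mul_sum, Finset.mul_sum, ← Finset.sum_add_distrib]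
            apply Finset.sum_congr rfl
            intro h _
            ring
        _ = ∑ k : Fin N → Fin K, ((Real.sqrt (q k) : ℝ) : ℂ) * ((Real.sqrt 2 : ℝ) : ℂ)⁻¹ *
              ((∏ i, M i (f0 i) (ev (k i))) + (∏ i, M i (f0 i) (od (k i)))) := by
            apply Finset.sum_congr rfl
            intro k _
            rw [hcollapse (fun i => 2 * (k i : ℕ)) (fun i => ev (k i)) (fun i => rfl),
              hcollapse (fun i => 2 * (k i : ℕ) + 1) (fun i => od (k i)) (fun i => rfl)]
        _ = ∑ k : Fin N → Fin K,
              (if k = κ then ((Real.sqrt (q k) : ℝ) : ℂ) * ((Real.sqrt 2 : ℝ) : ℂ)⁻¹ *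
                (Astar11 N (b i0) 0 * P0 + Astar11 N (b i0) 1 * P1) else 0) := by
            apply Finset.sum_congr rfl
            intro k _
            rw [hD k 0 (fun i => ev (k i)) (fun i => by simp [ev]),
              hD k 1 (fun i => od (k i)) (fun i => by simp [od])]
            by_cases hk : k = κ
            · rw [if_pos hk, if_pos hk, if_pos hk]
            · rw [if_neg hk, if_neg hk, if_neg hk, add_zero, mul_zero]
        _ = ((Real.sqrt (q κ) : ℝ) : ℂ) * ((Real.sqrt 2 : ℝ) : ℂ)⁻¹ *
              (Astar11 N (b i0) 0 * P0 + Astar11 N (b i0) 1 * P1) := by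
            rw [Finset.sum_ite_eq' Finset.univ κ, if_pos (Finset.mem_univ κ)]
    -- junk evaluation
    have hjunk : junk N K q g = ((Real.sqrt (q κ) : ℝ) : ℂ) := by
      simp only [junk]
      rw [Finset.sum_eq_single κ]
      · rw [Finset.prod_eq_one fun i _ => if_pos (hgi i), mul_one]
      · intro k _ hk
        obtain ⟨j, hj⟩ := Function.ne_iff.mp hk
        have hz : (∏ i, if (g i : ℕ) = 2 * (k i : ℕ) then (1 : ℂ) else 0) = 0 := by
          apply Finset.prod_eq_zero (Finset.mem_univ j)
          apply if_neg
          intro hc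
          have h1 := hgi j
          exact hj (Fin.ext (by omega))
        rw [hz, mul_zero]
      · intro hc
        exact absurd (Finset.mem_univ κ) hc
    -- GHZ side evaluation
    have hGHZ : (tensorN N M2).mulVec (ghz N) b
        = ((Real.sqrt 2 : ℝ) : ℂ)⁻¹ *
            (Astar11 N (b i0) 0 * P0 + Astar11 N (b i0) 1 * P1) := by
      show (∑ c : Fin N → Fin 2, (∏ i, M2 i (b i) (c i)) * ghz N c) = _
      have hg2 : ∀ c : Fin N → Fin 2, ghz N c
          = (if c = (fun _ => 0) then ((Real.sqrt 2 : ℝ) : ℂ)⁻¹ else 0)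
            + (if c = (fun _ => 1) then ((Real.sqrt 2 : ℝ) : ℂ)⁻¹ else 0) := by
        intro c
        simp only [ghz]
        by_cases h0 : c = fun _ => 0
        · subst h0
          rw [if_pos rfl, if_pos rfl, if_neg, add_zero]
          intro hc
          have h1 := congrFun hc i0
          simp at h1
        · rw [if_neg h0, if_neg h0, zero_add]
      rw [Finset.sum_congr rfl fun c _ => by
        rw [hg2 c, mul_add, mul_ite, mul_zero, mul_ite, mul_zero]]
      rw [Finset.sum_add_distrib,
        Finset.sum_ite_eq' Finset.univ (fun _ => (0 : Fin 2))
          (fun c => (∏ i, M2 i (b i) (c i)) * ((Real.sqrt 2 : ℝ) : ℂ)⁻¹),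
        Finset.sum_ite_eq' Finset.univ (fun _ => (1 : Fin 2))
          (fun c => (∏ i, M2 i (b i) (c i)) * ((Real.sqrt 2 : ℝ) : ℂ)⁻¹),
        if_pos (Finset.mem_univ _), if_pos (Finset.mem_univ _)]
      have hsplit : ∀ t : Fin 2,
          (∏ i, M2 i (b i) t)
            = Astar11 N (b i0) t * ∏ i ∈ Finset.univ.erase i0, (if b i = t then (1 : ℂ) else 0) := by
        intro t
        rw [← Finset.mul_prod_erase Finset.univ _ (Finset.mem_univ i0)]
        have hfac : M2 i0 (b i0) t = Astar11 N (b i0) t := by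
          show (if i0 = i0 then Astar11 N else 1) (b i0) t = _
          rw [if_pos rfl]
        have hrest : (∏ i ∈ Finset.univ.erase i0, M2 i (b i) t)
            = ∏ i ∈ Finset.univ.erase i0, (if b i = t then (1 : ℂ) else 0) := by
          apply Finset.prod_congr rfl
          intro i hi
          have hii : i ≠ i0 := Finset.ne_of_mem_erase hi
          show (if i = i0 then Astar11 N else 1) (b i) t = _
          rw [if_neg hii, Matrix.one_apply]
        rw [hfac, hrest]
      show (∏ i, M2 i (b i) 0) * ((Real.sqrt 2 : ℝ) : ℂ)⁻¹
          + (∏ i, M2 i (b i) 1) * ((Real.sqrt 2 : ℝ) : ℂ)⁻¹ = _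
      rw [hsplit 0, hsplit 1, ← hP0, ← hP1]
      ring
    rw [hLHS, hjunk, hGHZ]
    ring
  · -- some g i is odd: both sides vanish
    push_neg at hg
    obtain ⟨i1, hi1⟩ := hg
    have hJ : junk N K q g = 0 := by
      apply Finset.sum_eq_zero
      intro k _
      rw [Finset.prod_eq_zero (Finset.mem_univ i1) (by rw [if_neg]; omega), mul_zero]
    rw [hJ, zero_mul]
    apply Finset.sum_eq_zero
    intro f _
    rw [Finset.prod_eq_zero (Finset.mem_univ i1)
      (by simp only [isoEntry]; rw [if_neg]; rintro ⟨h1, -⟩; omega), zero_mul]
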